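/- For any covector J on a Lorentzian vector space, the superenergy tensor T{J}_{ab} = J_a J_b - (1/2)(J·J) g_{ab} has the dominant property: T{J}(u,v) ≥ 0 for all future-pointing causal vectors u, v. -/
import Mathlib


noncomputable section

/-- Minkowski signature factors: (+1, -1, ..., -1). -/
def eta {n : ℕ} (i : Fin (n + 1)) : ℝ := if i = 0 then 1 else -1

/-- The Minkowski (Lorentzian) inner product of signature (+,-,...,-). -/
def mink {n : ℕ} (u v : Fin (n + 1) → ℝ) : ℝ := ∑ i, eta i * u i * v i

/-- A causal future-pointing vector. -/
def CausalFuture {n : ℕ} (u : Fin (n + 1) → ℝ) : Prop :=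
  0 ≤ mink u u ∧ u ≠ 0 ∧ 0 < u 0

/-- A null future-pointing vector. -/
def NullFuture {n : ℕ} (u : Fin (n + 1) → ℝ) : Prop :=
  mink u u = 0 ∧ u ≠ 0 ∧ 0 < u 0

/-- A timelike future-pointing vector. -/
def TimelikeFuture {n : ℕ} (u : Fin (n + 1) → ℝ) : Prop :=
  0 < mink u u ∧ 0 < u 0

/-- The Lorentzian metric as a matrix (covariant components). -/
def gMat {n : ℕ} : Matrix (Fin (n + 1)) (Fin (n + 1)) ℝ := Matrix.diagonal eta

/-- Contraction of a rank-2 covariant tensor with two vectors. -/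
def quad {n : ℕ} (T : Matrix (Fin (n + 1)) (Fin (n + 1)) ℝ) (u v : Fin (n + 1) → ℝ) : ℝ :=
  ∑ a, ∑ b, u a * T a b * v b

/-- The dominant property for rank-2 tensors. -/
def DP2 {n : ℕ} (T : Matrix (Fin (n + 1)) (Fin (n + 1)) ℝ) : Prop :=
  ∀ u v, CausalFuture u → CausalFuture v → 0 ≤ quad T u v

/-- (T ₂×₂ T)_{ab} = T_{ac} T_b{}^c : contraction on the second index of each factor. -/
def sq2 {n : ℕ} (T : Matrix (Fin (n + 1)) (Fin (n + 1)) ℝ) :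
    Matrix (Fin (n + 1)) (Fin (n + 1)) ℝ :=
  Matrix.of fun a b => ∑ c, eta c * T a c * T b c

/-- (T ₁×₁ T)_{ab} = T_{ca} T^c{}_b : contraction on the first index of each factor. -/
def sq1 {n : ℕ} (T : Matrix (Fin (n + 1)) (Fin (n + 1)) ℝ) :
    Matrix (Fin (n + 1)) (Fin (n + 1)) ℝ :=
  Matrix.of fun a b => ∑ c, eta c * T c a * T c b

/-- The linear map v^a ↦ v^a T_a{}^b defined by a rank-2 tensor T. -/
def tmap {n : ℕ} (T : Matrix (Fin (n + 1)) (Fin (n + 1)) ℝ) (v : Fin (n + 1) → ℝ) :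
    Fin (n + 1) → ℝ := fun b => eta b * ∑ a, v a * T a b

/-- (A×B)_{ab} := A_{ca} B^c{}_b. -/
def xprod {n : ℕ} (A B : Matrix (Fin (n + 1)) (Fin (n + 1)) ℝ) :
    Matrix (Fin (n + 1)) (Fin (n + 1)) ℝ :=
  Matrix.of fun a b => ∑ c, eta c * A c a * B c b

/-- The dominant property for rank-r covariant tensors. -/
def DP {n r : ℕ} (T : MultilinearMap ℝ (fun _ : Fin r => (Fin (n + 1) → ℝ)) ℝ) : Prop :=
  ∀ u : Fin r → (Fin (n + 1) → ℝ), (∀ i, CausalFuture (u i)) → 0 ≤ T u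

/-- The superenergy tensor of a covector J. -/
def seJ {n : ℕ} (J : Fin (n + 1) → ℝ) : Matrix (Fin (n + 1)) (Fin (n + 1)) ℝ :=
  Matrix.of fun a b => J a * J b - (1 / 2) * mink J J * gMat a b

lemma mink_split {n : ℕ} (u v : Fin (n + 1) → ℝ) :
    mink u v = u 0 * v 0 - ∑ c : Fin n, u c.succ * v c.succ := by
  have h0 : eta (0 : Fin (n + 1)) = 1 := if_pos rfl
  have hs : ∀ c : Fin n, eta (c.succ : Fin (n + 1)) = -1 := fun c => if_neg (Fin.succ_ne_zero c)
  rw [mink, Fin.sum_univ_succ]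
  simp only [h0, hs, one_mul, neg_mul, neg_one_mul, Finset.sum_neg_distrib]
  ring

lemma quad_seJ {n : ℕ} (J u v : Fin (n + 1) → ℝ) :
    quad (seJ J) u v
      = (∑ i, u i * J i) * (∑ i, v i * J i) - (1 / 2) * mink J J * mink u v := by
  have hrow : ∀ a : Fin (n + 1),
      ∑ b, u a * seJ J a b * v b
        = (u a * J a) * (∑ i, v i * J i) - (1 / 2) * mink J J * (eta a * u a * v a) := by
    intro a
    have h1 : ∀ b ∈ Finset.univ, u a * seJ J a b * v b
        = (u a * J a) * (v b * J b)
          - (1 / 2) * mink J J * (u a * Matrix.diagonal eta a b * v b) := by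
      intro b _
      simp only [seJ, gMat, Matrix.of_apply]
      ring
    have h2 : ∑ b, u a * Matrix.diagonal eta a b * v b = eta a * u a * v a := by
      simp only [Matrix.diagonal_apply, mul_ite, ite_mul, mul_zero, zero_mul,
        Finset.sum_ite_eq, Finset.mem_univ, if_true]
      ring
    rw [Finset.sum_congr rfl h1, Finset.sum_sub_distrib, ← Finset.mul_sum, ← Finset.mul_sum, h2]
  rw [quad, Finset.sum_congr rfl fun a _ => hrow a, Finset.sum_sub_distrib,
    ← Finset.sum_mul, ← Finset.mul_sum]
  rfl

/-- Cauchy–Schwarz, mul_self version. -/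
lemma cs_mul {n : ℕ} (f g : Fin n → ℝ) :
    (∑ c, f c * g c) * (∑ c, f c * g c) ≤ (∑ c, f c * f c) * (∑ c, g c * g c) := by
  have := Finset.sum_mul_sq_le_sq_mul_sq Finset.univ f g
  simpa only [pow_two] using this

/-- the superenergy tensor of any covector has the dominant
property. -/
theorem stmt16 {n : ℕ} (J : Fin (n + 1) → ℝ) : DP2 (seJ J) := by
  intro u v hu hv
  obtain ⟨hu1, -, ha⟩ := hu
  obtain ⟨hv1, -, hb⟩ := hv
  set a := u 0 with ha_def
  set b := v 0 with hb_def
  set p := J 0 with hp_def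
  set Su := ∑ c : Fin n, u c.succ * u c.succ with hSu_def
  set Sv := ∑ c : Fin n, v c.succ * v c.succ with hSv_def
  set Q := ∑ c : Fin n, J c.succ * J c.succ with hQ_def
  set A := ∑ c : Fin n, u c.succ * J c.succ with hA_def
  set B := ∑ c : Fin n, v c.succ * J c.succ with hB_def
  set s := ∑ c : Fin n, u c.succ * v c.succ with hs_def
  -- rewrite the goal in scalar form
  have hgoal : quad (seJ J) u v
      = (a * p + A) * (b * p + B) - (1 / 2) * (p * p - Q) * (a * b - s) := by
    rw [quad_seJ, mink_split J J, mink_split u v, Fin.sum_univ_succ (f := fun i => u i * J i),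
      Fin.sum_univ_succ (f := fun i => v i * J i)]
  rw [hgoal]
  -- scalar hypotheses
  rw [mink_split, ← hSu_def, ← ha_def] at hu1
  rw [mink_split, ← hSv_def, ← hb_def] at hv1
  have hu1' : Su ≤ a * a := by linarith
  have hv1' : Sv ≤ b * b := by linarith
  have hSu : (0:ℝ) ≤ Su := by
    rw [hSu_def]; exact Finset.sum_nonneg fun c _ => mul_self_nonneg _
  have hSv : (0:ℝ) ≤ Sv := by
    rw [hSv_def]; exact Finset.sum_nonneg fun c _ => mul_self_nonneg _
  have hQ : (0:ℝ) ≤ Q := by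
    rw [hQ_def]; exact Finset.sum_nonneg fun c _ => mul_self_nonneg _
  have hCSA : A * A ≤ Su * Q := by
    rw [hA_def, hSu_def, hQ_def]; exact cs_mul _ _
  have hCSB : B * B ≤ Sv * Q := by
    rw [hB_def, hSv_def, hQ_def]; exact cs_mul _ _
  have hCSs : s * s ≤ Su * Sv := by
    rw [hs_def, hSu_def, hSv_def]; exact cs_mul _ _
  -- Gram inequality via Cauchy–Schwarz on projected vectors
  have key := cs_mul (fun c => Su * v c.succ - s * u c.succ) (fun c => Su * J c.succ - A * u c.succ)
  have l1 : ∑ c : Fin n, (Su * v c.succ - s * u c.succ) * (Su * J c.succ - A * u c.succ)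
      = Su * (Su * B - A * s) := by
    have e : ∀ c ∈ (Finset.univ : Finset (Fin n)),
        (Su * v c.succ - s * u c.succ) * (Su * J c.succ - A * u c.succ)
        = Su * Su * (v c.succ * J c.succ) - Su * A * (u c.succ * v c.succ)
          - s * Su * (u c.succ * J c.succ) + s * A * (u c.succ * u c.succ) := by
      intro c _; ring
    rw [Finset.sum_congr rfl e, Finset.sum_add_distrib, Finset.sum_sub_distrib,
      Finset.sum_sub_distrib, ← Finset.mul_sum, ← Finset.mul_sum, ← Finset.mul_sum,
      ← Finset.mul_sum, ← hA_def, ← hB_def, ← hs_def, ← hSu_def]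
    ring
  have l2 : ∑ c : Fin n, (Su * v c.succ - s * u c.succ) * (Su * v c.succ - s * u c.succ)
      = Su * (Su * Sv - s * s) := by
    have e : ∀ c ∈ (Finset.univ : Finset (Fin n)),
        (Su * v c.succ - s * u c.succ) * (Su * v c.succ - s * u c.succ)
        = Su * Su * (v c.succ * v c.succ) - 2 * Su * s * (u c.succ * v c.succ)
          + s * s * (u c.succ * u c.succ) := by
      intro c _; ring
    rw [Finset.sum_congr rfl e, Finset.sum_add_distrib, Finset.sum_sub_distrib,
      ← Finset.mul_sum, ← Finset.mul_sum, ← Finset.mul_sum, ← hSv_def, ← hs_def, ← hSu_def]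
    ring
  have l3 : ∑ c : Fin n, (Su * J c.succ - A * u c.succ) * (Su * J c.succ - A * u c.succ)
      = Su * (Su * Q - A * A) := by
    have e : ∀ c ∈ (Finset.univ : Finset (Fin n)),
        (Su * J c.succ - A * u c.succ) * (Su * J c.succ - A * u c.succ)
        = Su * Su * (J c.succ * J c.succ) - 2 * Su * A * (u c.succ * J c.succ)
          + A * A * (u c.succ * u c.succ) := by
      intro c _; ring
    rw [Finset.sum_congr rfl e, Finset.sum_add_distrib, Finset.sum_sub_distrib,
      ← Finset.mul_sum, ← Finset.mul_sum, ← Finset.mul_sum, ← hQ_def, ← hA_def, ← hSu_def]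
    ring
  rw [l1, l2, l3] at key
  have hGram3 : 0 ≤ Su * Su * (Su * (Su * Sv * Q + 2 * A * B * s - Su * (B * B)
      - Sv * (A * A) - Q * (s * s))) := by linarith
  clear key l1 l2 l3
  clear_value a b p Su Sv Q A B s
  clear ha_def hb_def hp_def hSu_def hSv_def hQ_def hA_def hB_def hs_def hgoal
  -- from Su³ * G ≥ 0 deduce G ≥ 0
  have hG : 0 ≤ Su * Sv * Q + 2 * A * B * s - Su * (B * B) - Sv * (A * A) - Q * (s * s) := by
    rcases eq_or_lt_of_le hSu with h0 | hpos
    · have hA0 : A = 0 := by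
        have h1 : A * A ≤ 0 := by rw [← h0] at hCSA; simpa using hCSA
        exact mul_self_eq_zero.mp (le_antisymm h1 (mul_self_nonneg A))
      have hs0 : s = 0 := by
        have h1 : s * s ≤ 0 := by rw [← h0] at hCSs; simpa using hCSs
        exact mul_self_eq_zero.mp (le_antisymm h1 (mul_self_nonneg s))
      rw [hA0, hs0, ← h0]; norm_num
    · by_contra hcon
      push_neg at hcon
      nlinarith [hGram3, mul_pos (mul_pos hpos hpos) hpos, hcon]
  -- discriminant inequality
  have hx : 0 ≤ a * a - Su := by linarith
  have hy : 0 ≤ b * b - Sv := by linarith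
  have t1 : 0 ≤ (a * a - Su) * (Sv * Q - B * B) := mul_nonneg hx (by linarith)
  have t2 : 0 ≤ (b * b - Sv) * (Su * Q - A * A) := mul_nonneg hy (by linarith)
  have t3 : 0 ≤ Q * ((a * a - Su) * (b * b - Sv)) := mul_nonneg hQ (mul_nonneg hx hy)
  have hD : 0 ≤ a * a * (b * b) * Q - a * a * (B * B) - b * b * (A * A) + 2 * A * B * s
      - Q * (s * s) := by linarith
  clear t1 t2 t3 hGram3
  -- |s| ≤ a*b
  have habs : s * s ≤ a * a * (b * b) := by
    nlinarith [hCSs, mul_nonneg hx hSv, mul_nonneg (mul_nonneg ha.le ha.le) hy]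
  have hα : 0 ≤ a * b + s := by nlinarith [habs, mul_pos ha hb]
  have hA2 : A * A ≤ a * a * Q := by nlinarith [mul_nonneg hx hQ, hCSA]
  clear hG hCSB hCSs hCSA hSu hSv hu1 hv1 hu1' hv1' hx hy habs hQ
  rcases eq_or_lt_of_le hα with hzero | hposα
  · -- degenerate case : s = -(a*b)
    have hsval : s = -(a * b) := by linarith
    rw [hsval] at hD ⊢
    have hsq0 : (a * B + b * A) * (a * B + b * A) ≤ 0 := by nlinarith [hD]
    have haB : a * B + b * A = 0 :=
      mul_self_eq_zero.mp (le_antisymm hsq0 (mul_self_nonneg _))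
    have hval : (a * p + A) * (b * p + B) - 1 / 2 * (p * p - Q) * (a * b - -(a * b))
        = p * (a * B + b * A) + (A * B + a * b * Q) := by ring
    rw [hval, haB, mul_zero, zero_add]
    have hABe : A * (a * B) + A * (b * A) = 0 := by linear_combination A * haB
    nlinarith [hABe, hA2, ha, hb, mul_nonneg hb.le (sub_nonneg.mpr hA2)]
  · clear hα hA2
    nlinarith [hD, sq_nonneg ((a * b + s) * p + (a * B + b * A)), hposα]
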